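/- Let p and q be odd natural numbers. The number of pair partitions of {1,...,p+q} with exactly one cross equals p·q·(p-2)!!·(q-2)!!. -/

import Mathlib

open Finset

/-- A block of a partition of `Fin (p+q)` is a cross if it meets both
`{0,...,p-1}` and `{p,...,p+q-1}`. -/
def IsCross (p q : ℕ) (b : Finset (Fin (p + q))) : Prop :=
  (∃ i ∈ b, (i : ℕ) < p) ∧ ∃ i ∈ b, p ≤ (i : ℕ)

instance (p q : ℕ) (b : Finset (Fin (p + q))) : Decidable (IsCross p q b) := by
  unfold IsCross; infer_instance

/-- The number of crosses of a partition of `Fin (p+q)`. -/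
def crossCount (p q : ℕ) (P : Finpartition (Finset.univ : Finset (Fin (p + q)))) : ℕ :=
  (P.parts.filter (IsCross p q)).card

open scoped Nat

namespace PairCount

set_option linter.unusedSectionVars false

variable {α : Type*} [Fintype α] [DecidableEq α]

noncomputable instance (s : Finset α) : Fintype (Finpartition s) :=
  Fintype.ofInjective Finpartition.parts fun _ _ h => Finpartition.ext h

/-- Pair partitions (perfect matchings) of a finset. -/
def M (s : Finset α) : Type _ := {P : Finpartition s // ∀ b ∈ P.parts, b.card = 2}

noncomputable instance (s : Finset α) : Fintype (M s) := by
  unfold M; exact Fintype.ofFinite _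

lemma M.ext {s : Finset α} {P Q : M s} (h : P.1.parts = Q.1.parts) : P = Q :=
  Subtype.ext (Finpartition.ext h)

/-- Extend a matching by a new pair. -/
def extendM {s : Finset α} {a x : α} (ha : a ∈ s) (hx : x ∈ s.erase a)
    (Q : M ((s.erase a).erase x)) : M s := by
  have hxa : x ≠ a := (mem_erase.1 hx).1
  have hxs : x ∈ s := (mem_erase.1 hx).2
  refine ⟨Q.1.extend (b := ({a, x} : Finset α)) ?_ ?_ ?_, ?_⟩
  · simp [← Finset.nonempty_iff_ne_empty]
  · rw [Finset.disjoint_right]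
    intro y hy hy'
    rcases mem_insert.1 hy with rfl | hy
    · exact (mem_erase.1 (mem_erase.1 hy').2).1 rfl
    · rw [mem_singleton] at hy
      exact (mem_erase.1 hy').1 hy
  · ext y
    simp only [sup_eq_union, mem_union, mem_erase, mem_insert, mem_singleton]
    constructor
    · rintro (⟨_, _, h⟩ | rfl | rfl) <;> assumption
    · intro hy
      by_cases h1 : y = a
      · tauto
      · by_cases h2 : y = x <;> tauto
  · intro b hb
    rw [Finpartition.extend_parts, mem_insert] at hb
    rcases hb with rfl | hb
    · rw [card_insert_of_notMem (by simpa using fun h => (hxa h.symm).elim), card_singleton]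
    · exact Q.2 b hb

lemma extendM_parts {s : Finset α} {a x : α} (ha : a ∈ s) (hx : x ∈ s.erase a)
    (Q : M ((s.erase a).erase x)) :
    (extendM ha hx Q).1.parts = insert {a, x} Q.1.parts := rfl

/-- Disjoint union of matchings. -/
def MdisjUnion {s t : Finset α} (hst : Disjoint s t) (Q1 : M s) (Q2 : M t) : M (s ∪ t) := by
  refine ⟨⟨Q1.1.parts ∪ Q2.1.parts, ?_, ?_, ?_⟩, ?_⟩
  · rw [Finset.supIndep_iff_pairwiseDisjoint, coe_union]
    rintro x hx y hy hxy
    rcases hx with hx | hx <;> rcases hy with hy | hy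
    · exact Q1.1.disjoint hx hy hxy
    · exact (hst.mono (Q1.1.le hx) (Q2.1.le hy) : Disjoint x y)
    · exact ((hst.symm).mono (Q2.1.le hx) (Q1.1.le hy) : Disjoint x y)
    · exact Q2.1.disjoint hx hy hxy
  · rw [Finset.sup_union, Q1.1.sup_parts, Q2.1.sup_parts, sup_eq_union]
  · intro h
    rcases mem_union.1 h with h | h
    · exact Q1.1.bot_notMem h
    · exact Q2.1.bot_notMem h
  · intro b hb
    rcases mem_union.1 hb with h | h
    · exact Q1.2 b h
    · exact Q2.2 b h

lemma MdisjUnion_parts {s t : Finset α} (hst : Disjoint s t) (Q1 : M s) (Q2 : M t) :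
    (MdisjUnion hst Q1 Q2).1.parts = Q1.1.parts ∪ Q2.1.parts := rfl

lemma step_bijective {s : Finset α} {a : α} (ha : a ∈ s) :
    Function.Bijective (fun z : Σ x : {x // x ∈ s.erase a}, M ((s.erase a).erase x.1) =>
      extendM ha z.1.2 z.2) := by
  constructor
  · rintro ⟨⟨x, hx⟩, Q⟩ ⟨⟨x', hx'⟩, Q'⟩ h
    have hparts : insert ({a, x} : Finset α) Q.1.parts = insert {a, x'} Q'.1.parts := by
      have := congrArg (fun P : M s => P.1.parts) h
      simpa [extendM_parts] using this
    -- the part containing a is the same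
    have hxx' : x = x' := by
      have hmem : ({a, x} : Finset α) ∈ insert ({a, x'} : Finset α) Q'.1.parts := by
        rw [← hparts]; exact mem_insert_self _ _
      rcases mem_insert.1 hmem with heq | hmem'
      · have : x ∈ ({a, x'} : Finset α) := heq ▸ (by simp : x ∈ ({a, x} : Finset α))
        rcases mem_insert.1 this with rfl | h'
        · exact absurd rfl (mem_erase.1 hx).1
        · exact mem_singleton.1 h'
      · exfalso
        have := Q'.1.le hmem'
        have : a ∈ (s.erase a).erase x' := this (by simp)
        exact (mem_erase.1 (mem_erase.1 this).2).1 rfl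
    subst hxx'
    have hnot : ({a, x} : Finset α) ∉ Q.1.parts := by
      intro h'
      have := Q.1.le h' (by simp : a ∈ ({a, x} : Finset α))
      exact (mem_erase.1 (mem_erase.1 this).2).1 rfl
    have hnot' : ({a, x} : Finset α) ∉ Q'.1.parts := by
      intro h'
      have := Q'.1.le h' (by simp : a ∈ ({a, x} : Finset α))
      exact (mem_erase.1 (mem_erase.1 this).2).1 rfl
    have : Q.1.parts = Q'.1.parts := by
      have := congrArg (fun t => Finset.erase t ({a, x} : Finset α)) hparts
      simpa [erase_insert hnot, erase_insert hnot'] using this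
    exact congrArg _ (M.ext this)
  · rintro ⟨P, hP⟩
    set b := P.part a with hbdef
    have hb : b ∈ P.parts := P.part_mem.2 ha
    have hab : a ∈ b := P.mem_part ha
    have hb2 : b.card = 2 := hP b hb
    obtain ⟨u, v, huv, hbuv⟩ := Finset.card_eq_two.1 hb2
    -- get x, the partner of a
    obtain ⟨x, hxa, hbeq⟩ : ∃ x, x ≠ a ∧ b = {a, x} := by
      rw [hbuv] at hab ⊢
      rcases mem_insert.1 hab with rfl | h
      · exact ⟨v, fun h => huv h.symm, rfl⟩
      · rw [mem_singleton] at h; subst h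
        exact ⟨u, huv, by rw [Finset.pair_comm]⟩
    have hxb : x ∈ b := by rw [hbeq]; simp
    have hxs : x ∈ s := P.le hb hxb
    have hx : x ∈ s.erase a := mem_erase.2 ⟨hxa, hxs⟩
    -- restricted partition
    have hQsup : (P.parts.erase b).sup id = (s.erase a).erase x := by
      ext y
      simp only [mem_sup, mem_erase, id]
      constructor
      · rintro ⟨c, hc, hyc⟩
        have hcP := hc.2
        have hcb := hc.1
        have hys : y ∈ s := P.le hcP hyc
        have hyb : y ∉ b := by
          intro hyb
          exact hcb (P.eq_of_mem_parts hcP hb hyc hyb)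
        rw [hbeq] at hyb
        simp only [mem_insert, mem_singleton, not_or] at hyb
        exact ⟨hyb.2, hyb.1, hys⟩
      · rintro ⟨hyx, hya, hys⟩
        refine ⟨P.part y, ⟨?_, P.part_mem.2 hys⟩, P.mem_part hys⟩
        intro heq
        have : y ∈ b := heq ▸ P.mem_part hys
        rw [hbeq] at this
        rcases mem_insert.1 this with rfl | h
        · exact hya rfl
        · exact hyx (mem_singleton.1 h)
    refine ⟨⟨⟨x, hx⟩, ⟨⟨P.parts.erase b, ?_, hQsup, ?_⟩, ?_⟩⟩, ?_⟩
    · exact P.supIndep.subset (erase_subset _ _)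
    · exact fun h => P.bot_notMem (mem_of_mem_erase h)
    · exact fun c hc => hP c (mem_of_mem_erase hc)
    · apply M.ext
      show insert ({a, x} : Finset α) (P.parts.erase b) = P.parts
      rw [← hbeq, insert_erase hb]


lemma df_step (m : ℕ) : (m + 1) * (m - 1)‼ = (m + 1)‼ := by
  cases m with
  | zero => simp
  | succ k =>
    show (k + 2) * k‼ = (k + 2)‼
    rw [Nat.doubleFactorial_add_two]

instance : Unique (M (∅ : Finset α)) where
  default := ⟨(default : Finpartition (⊥ : Finset α)), by
    intro b hb
    exact absurd (le_antisymm ((default : Finpartition (⊥ : Finset α)).le hb) bot_le)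
      ((default : Finpartition (⊥ : Finset α)).ne_bot hb)⟩
  uniq := fun P =>
    Subtype.ext (@Subsingleton.elim (Finpartition (⊥ : Finset α)) Unique.instSubsingleton _ _)

lemma M_card (s : Finset α) :
    Nat.card (M s) = if Even s.card then (s.card - 1)‼ else 0 := by
  induction s using Finset.strongInduction with
  | _ s ih =>
    rcases s.eq_empty_or_nonempty with rfl | ⟨a, ha⟩
    · simp [Nat.card_unique]
    · by_cases hev : Even s.card
      · have hs2 : 2 ≤ s.card := by
          rcases hev with ⟨k, hk⟩
          have : s.card ≠ 0 := by simp [Finset.card_eq_zero, ← Finset.nonempty_iff_ne_empty]; exact ⟨a, ha⟩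
          omega
        rw [if_pos hev, ← Nat.card_eq_of_bijective _ (step_bijective ha),
          Nat.card_eq_fintype_card, Fintype.card_sigma]
        have hsum : ∀ x : {x // x ∈ s.erase a},
            Fintype.card (M ((s.erase a).erase x.1)) = (s.card - 3)‼ := by
          rintro ⟨x, hx⟩
          have hss : (s.erase a).erase x ⊂ s :=
            (Finset.erase_subset x _).trans_ssubset (Finset.erase_ssubset ha)
          have hcard : ((s.erase a).erase x).card = s.card - 2 := by
            rw [card_erase_of_mem hx, card_erase_of_mem ha]
            omega
          rw [← Nat.card_eq_fintype_card, ih _ hss, hcard,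
            if_pos (by rcases hev with ⟨k, hk⟩; exact ⟨k - 1, by omega⟩)]
          congr 1
        calc ∑ x : {x // x ∈ s.erase a}, Fintype.card (M ((s.erase a).erase x.1))
            = ∑ _x : {x // x ∈ s.erase a}, (s.card - 3)‼ := by
              exact Finset.sum_congr rfl fun x _ => hsum x
          _ = (s.card - 1) * (s.card - 3)‼ := by
              rw [Finset.sum_const, smul_eq_mul, Finset.card_univ, Fintype.card_coe,
                card_erase_of_mem ha]
          _ = (s.card - 1)‼ := by
              obtain ⟨m, hm⟩ : ∃ m, s.card = m + 2 := ⟨s.card - 2, by omega⟩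
              rw [hm]
              show (m + 1) * (m + 2 - 3)‼ = (m + 1)‼
              rw [show m + 2 - 3 = m - 1 by omega]
              exact df_step m
      · rw [if_neg hev]
        have : IsEmpty (M s) := by
          constructor
          rintro ⟨P, hP⟩
          apply hev
          rw [← P.sum_card_parts]
          refine (Finset.sum_congr rfl hP).symm ▸ ?_
          rw [Finset.sum_const, smul_eq_mul]
          exact ⟨P.parts.card, by ring⟩
        exact Nat.card_of_isEmpty

section Main

variable {p q : ℕ}

/-- The left half of `Fin (p+q)`. -/
def L (p q : ℕ) : Finset (Fin (p + q)) := univ.filter fun i => (i : ℕ) < p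

/-- The right half of `Fin (p+q)`. -/
def R (p q : ℕ) : Finset (Fin (p + q)) := univ.filter fun i => p ≤ (i : ℕ)

lemma mem_L {i : Fin (p + q)} : i ∈ L p q ↔ (i : ℕ) < p := by simp [L]

lemma mem_R {i : Fin (p + q)} : i ∈ R p q ↔ p ≤ (i : ℕ) := by simp [R]

lemma L_disj_R : Disjoint (L p q) (R p q) := by
  rw [Finset.disjoint_left]
  intro x hx hx'
  rw [mem_L] at hx; rw [mem_R] at hx'
  omega

/-- The left half is equivalent to `Fin p`. -/
def eL (p q : ℕ) : {i : Fin (p + q) // (i : ℕ) < p} ≃ Fin p where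
  toFun x := ⟨x.1, x.2⟩
  invFun i := ⟨⟨i.1, lt_of_lt_of_le i.2 (Nat.le_add_right p q)⟩, i.2⟩
  left_inv x := Subtype.ext (Fin.ext rfl)
  right_inv i := rfl

/-- The right half is equivalent to `Fin q`. -/
def eR (p q : ℕ) : {i : Fin (p + q) // p ≤ (i : ℕ)} ≃ Fin q where
  toFun x := ⟨x.1 - p, by have := x.1.isLt; have := x.2; omega⟩
  invFun j := ⟨⟨p + j.1, by have := j.isLt; omega⟩, by simp⟩
  left_inv x := Subtype.ext (Fin.ext (by have := x.2; simp; omega))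
  right_inv j := Fin.ext (by simp)

lemma card_L : (L p q).card = p := by
  rw [L, ← Fintype.card_subtype, Fintype.card_congr (eL p q), Fintype.card_fin]

lemma card_R : (R p q).card = q := by
  rw [R, ← Fintype.card_subtype, Fintype.card_congr (eR p q), Fintype.card_fin]

/-- The subtype of pair partitions with exactly one cross. -/
abbrev T (p q : ℕ) : Type :=
  {P : Finpartition (Finset.univ : Finset (Fin (p + q))) //
    (∀ b ∈ P.parts, b.card = 2) ∧ crossCount p q P = 1}

/-- Glue a cross `{i, j}` and matchings of the two remaining halves into a pair
partition with exactly one cross. -/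
def glue (i j : Fin (p + q)) (hi : (i : ℕ) < p) (hj : p ≤ (j : ℕ))
    (Q1 : M ((L p q).erase i)) (Q2 : M ((R p q).erase j)) : T p q := by
  have hij : i ≠ j := by intro h; rw [h] at hi; omega
  have hdisj : Disjoint ((L p q).erase i) ((R p q).erase j) :=
    L_disj_R.mono (erase_subset _ _) (erase_subset _ _)
  have hLi : ∀ b ∈ Q1.1.parts, ∀ z ∈ b, (z : ℕ) < p ∧ z ≠ i := by
    intro b hb z hz
    have := Q1.1.le hb hz
    exact ⟨mem_L.1 (mem_of_mem_erase this), (mem_erase.1 this).1⟩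
  have hRj : ∀ b ∈ Q2.1.parts, ∀ z ∈ b, p ≤ (z : ℕ) ∧ z ≠ j := by
    intro b hb z hz
    have := Q2.1.le hb hz
    exact ⟨mem_R.1 (mem_of_mem_erase this), (mem_erase.1 this).1⟩
  refine ⟨(MdisjUnion hdisj Q1 Q2).1.extend (b := ({i, j} : Finset (Fin (p + q)))) ?_ ?_ ?_,
    ?_, ?_⟩
  · simp [← Finset.nonempty_iff_ne_empty]
  · rw [Finset.disjoint_right]
    intro z hz hz'
    rcases mem_insert.1 hz with rfl | hz
    · rcases mem_union.1 hz' with h | h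
      · exact (mem_erase.1 h).1 rfl
      · have := mem_R.1 (mem_of_mem_erase h); omega
    · rw [mem_singleton] at hz; subst hz
      rcases mem_union.1 hz' with h | h
      · have := mem_L.1 (mem_of_mem_erase h); omega
      · exact (mem_erase.1 h).1 rfl
  · ext z
    simp only [sup_eq_union, mem_union, mem_insert, mem_singleton, mem_erase, mem_L, mem_R,
      mem_univ, iff_true]
    by_cases hz : (z : ℕ) < p
    · by_cases hzi : z = i
      · tauto
      · exact Or.inl (Or.inl ⟨hzi, hz⟩)
    · by_cases hzj : z = j
      · tauto
      · exact Or.inl (Or.inr ⟨hzj, by omega⟩)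
  · intro b hb
    rw [Finpartition.extend_parts, MdisjUnion_parts, mem_insert] at hb
    rcases hb with rfl | hb
    · rw [card_insert_of_notMem (by simpa using hij), card_singleton]
    · rcases mem_union.1 hb with h | h
      · exact Q1.2 b h
      · exact Q2.2 b h
  · show ((insert ({i, j} : Finset (Fin (p + q))) (Q1.1.parts ∪ Q2.1.parts)).filter
      (IsCross p q)).card = 1
    rw [filter_insert, if_pos ⟨⟨i, by simp, hi⟩, ⟨j, by simp, hj⟩⟩, filter_union]
    have h1 : Q1.1.parts.filter (IsCross p q) = ∅ := by
      rw [filter_eq_empty_iff]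
      rintro b hb ⟨-, z, hz, hz'⟩
      have := (hLi b hb z hz).1; omega
    have h2 : Q2.1.parts.filter (IsCross p q) = ∅ := by
      rw [filter_eq_empty_iff]
      rintro b hb ⟨⟨z, hz, hz'⟩, -⟩
      have := (hRj b hb z hz).1; omega
    rw [h1, h2]
    simp

lemma glue_parts (i j : Fin (p + q)) (hi : (i : ℕ) < p) (hj : p ≤ (j : ℕ))
    (Q1 : M ((L p q).erase i)) (Q2 : M ((R p q).erase j)) :
    (glue i j hi hj Q1 Q2).1.parts = insert {i, j} (Q1.1.parts ∪ Q2.1.parts) := rfl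

lemma glue_filter_cross (i j : Fin (p + q)) (hi : (i : ℕ) < p) (hj : p ≤ (j : ℕ))
    (Q1 : M ((L p q).erase i)) (Q2 : M ((R p q).erase j)) :
    (glue i j hi hj Q1 Q2).1.parts.filter (IsCross p q) = {({i, j} : Finset (Fin (p + q)))} := by
  rw [glue_parts, filter_insert, if_pos ⟨⟨i, by simp, hi⟩, ⟨j, by simp, hj⟩⟩, filter_union]
  have h1 : Q1.1.parts.filter (IsCross p q) = ∅ := by
    rw [filter_eq_empty_iff]
    rintro b hb ⟨-, z, hz, hz'⟩
    have := mem_L.1 (mem_of_mem_erase (Q1.1.le hb hz)); omega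
  have h2 : Q2.1.parts.filter (IsCross p q) = ∅ := by
    rw [filter_eq_empty_iff]
    rintro b hb ⟨⟨z, hz, hz'⟩, -⟩
    have := mem_R.1 (mem_of_mem_erase (Q2.1.le hb hz)); omega
  rw [h1, h2]
  simp

lemma glue_filter_L (i j : Fin (p + q)) (hi : (i : ℕ) < p) (hj : p ≤ (j : ℕ))
    (Q1 : M ((L p q).erase i)) (Q2 : M ((R p q).erase j)) :
    (glue i j hi hj Q1 Q2).1.parts.filter (· ⊆ (L p q).erase i) = Q1.1.parts := by
  apply Finset.Subset.antisymm
  · intro c hc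
    obtain ⟨hc1, hc2⟩ := mem_filter.1 hc
    rw [glue_parts] at hc1
    rcases mem_insert.1 hc1 with rfl | hc1
    · exfalso
      have := mem_L.1 (mem_of_mem_erase (hc2 (by simp : j ∈ ({i, j} : Finset (Fin (p + q))))))
      omega
    · rcases mem_union.1 hc1 with h | h
      · exact h
      · exfalso
        obtain ⟨z, hz⟩ := Q2.1.nonempty_of_mem_parts h
        have h1 := mem_L.1 (mem_of_mem_erase (hc2 hz))
        have h2 := mem_R.1 (mem_of_mem_erase (Q2.1.le h hz))
        omega
  · intro c hc
    refine mem_filter.2 ⟨?_, Q1.1.le hc⟩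
    rw [glue_parts]
    exact mem_insert_of_mem (mem_union_left _ hc)

lemma glue_filter_R (i j : Fin (p + q)) (hi : (i : ℕ) < p) (hj : p ≤ (j : ℕ))
    (Q1 : M ((L p q).erase i)) (Q2 : M ((R p q).erase j)) :
    (glue i j hi hj Q1 Q2).1.parts.filter (· ⊆ (R p q).erase j) = Q2.1.parts := by
  apply Finset.Subset.antisymm
  · intro c hc
    obtain ⟨hc1, hc2⟩ := mem_filter.1 hc
    rw [glue_parts] at hc1
    rcases mem_insert.1 hc1 with rfl | hc1
    · exfalso
      have := mem_R.1 (mem_of_mem_erase (hc2 (by simp : i ∈ ({i, j} : Finset (Fin (p + q))))))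
      omega
    · rcases mem_union.1 hc1 with h | h
      · exfalso
        obtain ⟨z, hz⟩ := Q1.1.nonempty_of_mem_parts h
        have h1 := mem_R.1 (mem_of_mem_erase (hc2 hz))
        have h2 := mem_L.1 (mem_of_mem_erase (Q1.1.le h hz))
        omega
      · exact h
  · intro c hc
    refine mem_filter.2 ⟨?_, Q2.1.le hc⟩
    rw [glue_parts]
    exact mem_insert_of_mem (mem_union_right _ hc)

/-- The source of the gluing bijection. -/
def Src (p q : ℕ) : Type :=
  Σ ij : ↥(L p q) × ↥(R p q), M ((L p q).erase ij.1.1) × M ((R p q).erase ij.2.1)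

noncomputable instance : Fintype (Src p q) := by unfold Src; infer_instance

/-- The gluing map, as a map from the sigma type. -/
def F (p q : ℕ) (z : Src p q) : T p q :=
  glue z.1.1.1 z.1.2.1 (mem_L.1 z.1.1.2) (mem_R.1 z.1.2.2) z.2.1 z.2.2

lemma F_bijective : Function.Bijective (F p q) := by
  constructor
  · rintro ⟨⟨⟨i, hiL⟩, ⟨j, hjR⟩⟩, Q1, Q2⟩ ⟨⟨⟨i', hiL'⟩, ⟨j', hjR'⟩⟩, Q1', Q2'⟩ h
    have hi := mem_L.1 hiL
    have hj := mem_R.1 hjR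
    have hi' := mem_L.1 hiL'
    have hj' := mem_R.1 hjR'
    have hparts : (glue i j hi hj Q1 Q2).1.parts = (glue i' j' hi' hj' Q1' Q2').1.parts :=
      congrArg (fun P : T p q => P.1.parts) h
    have hcross : ({i, j} : Finset (Fin (p + q))) = {i', j'} := by
      have := (glue_filter_cross i j hi hj Q1 Q2).symm.trans
        ((congrArg (fun t => Finset.filter (IsCross p q) t) hparts).trans
          (glue_filter_cross i' j' hi' hj' Q1' Q2'))
      exact singleton_injective this
    have hii : i = i' := by
      have : i ∈ ({i', j'} : Finset (Fin (p + q))) := hcross ▸ (by simp)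
      rcases mem_insert.1 this with h' | h'
      · exact h'
      · rw [mem_singleton] at h'; subst h'; omega
    have hjj : j = j' := by
      have : j ∈ ({i', j'} : Finset (Fin (p + q))) := hcross ▸ (by simp)
      rcases mem_insert.1 this with h' | h'
      · subst h'; omega
      · exact mem_singleton.1 h'
    subst hii; subst hjj
    have hQ1 : Q1 = Q1' := by
      apply M.ext
      rw [← glue_filter_L i j hi hj Q1 Q2, ← glue_filter_L i j hi' hj' Q1' Q2', hparts]
    have hQ2 : Q2 = Q2' := by
      apply M.ext
      rw [← glue_filter_R i j hi hj Q1 Q2, ← glue_filter_R i j hi' hj' Q1' Q2', hparts]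
    subst hQ1; subst hQ2
    rfl
  · rintro ⟨P, hP2, hPc⟩
    obtain ⟨b, hbfil⟩ := Finset.card_eq_one.1 hPc
    have hbmem : b ∈ P.parts.filter (IsCross p q) := hbfil ▸ mem_singleton_self b
    have hb : b ∈ P.parts := (mem_filter.1 hbmem).1
    obtain ⟨⟨i, hib, hi⟩, ⟨j, hjb, hj⟩⟩ := (mem_filter.1 hbmem).2
    have hij : i ≠ j := by intro h; rw [h] at hi; omega
    have hbeq : b = {i, j} := by
      refine (Finset.eq_of_subset_of_card_le (insert_subset hib (by simpa using hjb)) ?_).symm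
      rw [hP2 b hb, card_insert_of_notMem (by simpa using hij), card_singleton]
    -- every other part is inside one of the halves
    have hside : ∀ c ∈ P.parts, c ≠ b → c ⊆ (L p q).erase i ∨ c ⊆ (R p q).erase j := by
      intro c hc hcb
      have hnc : ¬ IsCross p q c := by
        intro hcr
        exact hcb (mem_singleton.1 (hbfil ▸ mem_filter.2 ⟨hc, hcr⟩))
      have hic : i ∉ c := fun h => hcb (P.eq_of_mem_parts hc hb h hib)
      have hjc : j ∉ c := fun h => hcb (P.eq_of_mem_parts hc hb h hjb)
      obtain ⟨y, hy⟩ := P.nonempty_of_mem_parts hc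
      by_cases hyp : (y : ℕ) < p
      · left
        intro z hz
        rw [mem_erase, mem_L]
        refine ⟨fun h => hic (h ▸ hz), ?_⟩
        by_contra hzp
        exact hnc ⟨⟨y, hy, hyp⟩, ⟨z, hz, by omega⟩⟩
      · right
        intro z hz
        rw [mem_erase, mem_R]
        refine ⟨fun h => hjc (h ▸ hz), ?_⟩
        by_contra hzp
        exact hnc ⟨⟨z, hz, by omega⟩, ⟨y, hy, by omega⟩⟩
    have hQ1sup : (P.parts.filter (· ⊆ (L p q).erase i)).sup id = (L p q).erase i := by
      ext y
      simp only [mem_sup, mem_filter, id]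
      constructor
      · rintro ⟨c, ⟨-, hc⟩, hyc⟩
        exact hc hyc
      · intro hy
        have hyL := mem_L.1 (mem_of_mem_erase hy)
        have hys : y ∈ (univ : Finset (Fin (p + q))) := mem_univ y
        have hyP := P.mem_part hys
        have hcb : P.part y ≠ b := by
          intro heq
          have : y ∈ ({i, j} : Finset (Fin (p + q))) := hbeq ▸ heq ▸ hyP
          rcases mem_insert.1 this with rfl | h'
          · exact (mem_erase.1 hy).1 rfl
          · rw [mem_singleton] at h'; subst h'; omega
        rcases hside _ (P.part_mem.2 hys) hcb with h | h
        · exact ⟨P.part y, ⟨P.part_mem.2 hys, h⟩, hyP⟩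
        · have := mem_R.1 (mem_of_mem_erase (h hyP)); omega
    have hQ2sup : (P.parts.filter (· ⊆ (R p q).erase j)).sup id = (R p q).erase j := by
      ext y
      simp only [mem_sup, mem_filter, id]
      constructor
      · rintro ⟨c, ⟨-, hc⟩, hyc⟩
        exact hc hyc
      · intro hy
        have hyR := mem_R.1 (mem_of_mem_erase hy)
        have hys : y ∈ (univ : Finset (Fin (p + q))) := mem_univ y
        have hyP := P.mem_part hys
        have hcb : P.part y ≠ b := by
          intro heq
          have : y ∈ ({i, j} : Finset (Fin (p + q))) := hbeq ▸ heq ▸ hyP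
          rcases mem_insert.1 this with rfl | h'
          · omega
          · rw [mem_singleton] at h'; subst h'; exact (mem_erase.1 hy).1 rfl
        rcases hside _ (P.part_mem.2 hys) hcb with h | h
        · have := mem_L.1 (mem_of_mem_erase (h hyP)); omega
        · exact ⟨P.part y, ⟨P.part_mem.2 hys, h⟩, hyP⟩
    set Q1 : M ((L p q).erase i) :=
      ⟨⟨P.parts.filter (· ⊆ (L p q).erase i), P.supIndep.subset (filter_subset _ _), hQ1sup,
        fun h => P.bot_notMem (mem_of_mem_filter _ h)⟩,
        fun c hc => hP2 c (mem_of_mem_filter _ hc)⟩ with hQ1def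
    set Q2 : M ((R p q).erase j) :=
      ⟨⟨P.parts.filter (· ⊆ (R p q).erase j), P.supIndep.subset (filter_subset _ _), hQ2sup,
        fun h => P.bot_notMem (mem_of_mem_filter _ h)⟩,
        fun c hc => hP2 c (mem_of_mem_filter _ hc)⟩ with hQ2def
    refine ⟨⟨⟨⟨i, mem_L.2 hi⟩, ⟨j, mem_R.2 hj⟩⟩, Q1, Q2⟩, ?_⟩
    apply Subtype.ext
    apply Finpartition.ext
    show insert ({i, j} : Finset (Fin (p + q))) (Q1.1.parts ∪ Q2.1.parts) = P.parts
    apply Finset.Subset.antisymm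
    · rw [insert_subset_iff]
      exact ⟨hbeq ▸ hb, union_subset (filter_subset _ _) (filter_subset _ _)⟩
    · intro c hc
      by_cases hcb : c = b
      · subst hcb; rw [hbeq]; exact mem_insert_self _ _
      · rcases hside c hc hcb with h | h
        · exact mem_insert_of_mem (mem_union_left _ (mem_filter.2 ⟨hc, h⟩))
        · exact mem_insert_of_mem (mem_union_right _ (mem_filter.2 ⟨hc, h⟩))

end Main

end PairCount

open PairCount in
/-- For odd `p, q`, the number of pair partitions of `{1,...,p+q}` with exactly one cross
equals `pq(p-2)!!(q-2)!!`. -/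
theorem count_pair_partitions_one_cross (p q : ℕ) (hp : Odd p) (hq : Odd q) :
    Nat.card {P : Finpartition (Finset.univ : Finset (Fin (p + q))) //
        (∀ b ∈ P.parts, b.card = 2) ∧ crossCount p q P = 1} =
      p * q * Nat.doubleFactorial (p - 2) * Nat.doubleFactorial (q - 2) := by
  refine ((Nat.card_eq_of_bijective _ (F_bijective (p := p) (q := q))).symm).trans ?_
  have hstep : Nat.card (Src p q) =
      Nat.card (Σ ij : ↥(L p q) × ↥(R p q),
        M ((L p q).erase ij.1.1) × M ((R p q).erase ij.2.1)) := rfl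
  rw [hstep, Nat.card_eq_fintype_card, Fintype.card_sigma]
  have hterm : ∀ ij : ↥(L p q) × ↥(R p q),
      Fintype.card (M ((L p q).erase ij.1.1) × M ((R p q).erase ij.2.1)) =
        (p - 2)‼ * (q - 2)‼ := by
    rintro ⟨⟨i, hi⟩, ⟨j, hj⟩⟩
    have hevp : Even (p - 1) := Nat.Odd.sub_odd hp odd_one
    have hevq : Even (q - 1) := Nat.Odd.sub_odd hq odd_one
    rw [Fintype.card_prod, ← Nat.card_eq_fintype_card, ← Nat.card_eq_fintype_card,
      M_card, M_card, card_erase_of_mem hi, card_erase_of_mem hj, card_L, card_R,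
      if_pos hevp, if_pos hevq]
    congr 2 <;> omega
  calc ∑ ij : ↥(L p q) × ↥(R p q),
        Fintype.card (M ((L p q).erase ij.1.1) × M ((R p q).erase ij.2.1))
      = ∑ _ij : ↥(L p q) × ↥(R p q), (p - 2)‼ * (q - 2)‼ :=
        Finset.sum_congr rfl fun ij _ => hterm ij
    _ = p * q * Nat.doubleFactorial (p - 2) * Nat.doubleFactorial (q - 2) := by
        rw [Finset.sum_const, smul_eq_mul, Finset.card_univ, Fintype.card_prod,
          Fintype.card_coe, Fintype.card_coe, card_L, card_R]
        ring
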